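/- arXiv:1710.09899 — 2 statements merged into one kernel-verified Lean document; each statement's English description precedes it below -/
import Mathlib

section
/- Let R be a ring and (C, W) a complete hereditary cotorsion pair on R-Mod in which C ∩ W is the class of projective modules. If M ∈ C, then M is Gorenstein AC-projective, i.e., M admits an exact complex of projectives ⋯ → P_1 → P_0 → P^0 → P^1 → ⋯ with M = ker(P^0 → P^1) that stays exact under Hom_R(−, L) for every level module L, provided all level modules lie in W. -/
open CategoryTheory Limits

noncomputable section
universe u
variable (R : Type u) [Ring R]

/-- The `n`-th Ext group of `X` and `Y` (as an abelian group / ℤ-module). -/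
abbrev extGrp (n : ℕ) (X Y : ModuleCat.{u} R) : Type u :=
  ((Ext ℤ (ModuleCat.{u} R) n).obj (Opposite.op X)).obj Y

/-- `Ext^n_R(X, Y) = 0`. -/
def extVanish (n : ℕ) (X Y : ModuleCat.{u} R) : Prop := Subsingleton (extGrp R n X Y)

/-- `F` admits a projective resolution by finitely generated projective modules. -/
def IsFPinf (F : ModuleCat.{u} R) : Prop :=
  ∃ P : CategoryTheory.ProjectiveResolution F, ∀ n, Module.Finite R (P.complex.X n)

/-- Absolutely clean module. -/
def IsAbsClean (A : ModuleCat.{u} R) : Prop := ∀ F, IsFPinf R F → extVanish R 1 F A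

/-- The right `R`-module structure on the character module of a left `R`-module. -/
instance charModuleOp (M : Type u) [AddCommGroup M] [Module R M] :
    Module Rᵐᵒᵖ (CharacterModule M) where
  smul r c := c.comp (DistribMulAction.toAddMonoidHom M r.unop)
  one_smul c := AddMonoidHom.ext fun x => by
    show c ((1 : Rᵐᵒᵖ).unop • x) = c x; simp
  mul_smul a b c := AddMonoidHom.ext fun x => by
    show c ((a * b).unop • x) = c (b.unop • a.unop • x)
    rw [MulOpposite.unop_mul, mul_smul]
  smul_zero r := AddMonoidHom.ext fun _ => rfl
  smul_add r c d := AddMonoidHom.ext fun _ => rfl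
  add_smul a b c := AddMonoidHom.ext fun x => by
    show c ((a + b).unop • x) = c (a.unop • x) + c (b.unop • x)
    rw [MulOpposite.unop_add, add_smul, map_add]
  zero_smul c := AddMonoidHom.ext fun x => by
    show c ((0 : Rᵐᵒᵖ).unop • x) = 0; simp

/-- The character module of a left module, as a right module. -/
def charMod (M : ModuleCat.{u} R) : ModuleCat.{u} Rᵐᵒᵖ :=
  ModuleCat.of Rᵐᵒᵖ (CharacterModule M)

/-- `Tor^R_n(F, M) = 0` for a right module `F` and left module `M`, encoded through the
natural isomorphism `Tor_n(F,M)⁺ ≅ Ext^n(F, M⁺)` and the fact that `ℚ/ℤ` is an injective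
cogenerator of abelian groups. -/
def torVanish (n : ℕ) (F : ModuleCat.{u} Rᵐᵒᵖ) (M : ModuleCat.{u} R) : Prop :=
  extVanish Rᵐᵒᵖ n F (charMod R M)

/-- Level module. -/
def IsLevel (L : ModuleCat.{u} R) : Prop :=
  ∀ F : ModuleCat.{u} Rᵐᵒᵖ, IsFPinf Rᵐᵒᵖ F → torVanish R 1 F L

/-- `M` admits a resolution `0 → C_n → ⋯ → C_0 → M → 0` with all terms in `P`. -/
def HasResLen (P : ModuleCat.{u} R → Prop) (n : ℕ) (M : ModuleCat.{u} R) : Prop :=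
  ∃ (C : ChainComplex (ModuleCat.{u} R) ℕ)
    (π : C ⟶ (ChainComplex.single₀ (ModuleCat.{u} R)).obj M),
    QuasiIso π ∧ (∀ i ≤ n, P (C.X i)) ∧ ∀ i, n < i → IsZero (C.X i)

/-- `M` admits a coresolution `0 → M → C^0 → ⋯ → C^n → 0` with all terms in `P`. -/
def HasCoresLen (P : ModuleCat.{u} R → Prop) (n : ℕ) (M : ModuleCat.{u} R) : Prop :=
  ∃ (C : CochainComplex (ModuleCat.{u} R) ℕ)
    (ι : (CochainComplex.single₀ (ModuleCat.{u} R)).obj M ⟶ C),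
    QuasiIso ι ∧ (∀ i ≤ n, P (C.X i)) ∧ ∀ i, n < i → IsZero (C.X i)

/-- Level dimension. -/
def ld (M : ModuleCat.{u} R) : ℕ∞ :=
  sInf {n : ℕ∞ | ∃ m : ℕ, n = m ∧ HasResLen R (IsLevel R) m M}

/-- Absolutely clean dimension. -/
def ad (M : ModuleCat.{u} R) : ℕ∞ :=
  sInf {n : ℕ∞ | ∃ m : ℕ, n = m ∧ HasCoresLen R (IsAbsClean R) m M}

/-- AC-Gorenstein ring with (bound on the) dimension `d`: every level left or right module
has absolutely clean dimension at most `d` and every absolutely clean left or right module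
has level dimension at most `d`. -/
def IsACGor (d : ℕ) : Prop :=
  (∀ L : ModuleCat.{u} R, IsLevel R L → ad R L ≤ d) ∧
  (∀ L : ModuleCat.{u} Rᵐᵒᵖ, IsLevel Rᵐᵒᵖ L → ad Rᵐᵒᵖ L ≤ d) ∧
  (∀ A : ModuleCat.{u} R, IsAbsClean R A → ld R A ≤ d) ∧
  (∀ A : ModuleCat.{u} Rᵐᵒᵖ, IsAbsClean Rᵐᵒᵖ A → ld Rᵐᵒᵖ A ≤ d)

/-- Gorenstein AC-projective module. -/
def IsGorACProj (M : ModuleCat.{u} R) : Prop :=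
  ∃ C : CochainComplex (ModuleCat.{u} R) ℤ,
    (∀ n, Projective (C.X n)) ∧ (∀ n, C.ExactAt n) ∧
    (∀ L, IsLevel R L → ∀ (n : ℤ) (f : C.X n ⟶ L), C.d (n-1) n ≫ f = 0 →
      ∃ g : C.X (n+1) ⟶ L, f = C.d n (n+1) ≫ g) ∧
    Nonempty (M ≅ kernel (C.d 0 1))

/-- Gorenstein AC-injective module. -/
def IsGorACInj (M : ModuleCat.{u} R) : Prop :=
  ∃ C : CochainComplex (ModuleCat.{u} R) ℤ,
    (∀ n, Injective (C.X n)) ∧ (∀ n, C.ExactAt n) ∧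
    (∀ A, IsAbsClean R A → ∀ (n : ℤ) (f : A ⟶ C.X n), f ≫ C.d n (n+1) = 0 →
      ∃ g : A ⟶ C.X (n-1), f = g ≫ C.d (n-1) n) ∧
    Nonempty (M ≅ kernel (C.d 0 1))


namespace GorTest

variable {R}


lemma subsingleton_iff_isZero (X : ModuleCat.{u} ℤ) : Subsingleton X ↔ IsZero X := by
  constructor
  · intro h
    exact ModuleCat.isZero_of_subsingleton X
  · intro h
    have h0 : (𝟙 X) = (0 : X ⟶ X) := h.eq_of_src _ _
    have hz : ∀ x : X, x = 0 := fun x => by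
      have := congrArg (fun (m : X ⟶ X) => m x) h0
      simpa using this
    exact ⟨fun a b => by rw [hz a, hz b]⟩

lemma factor_thru_surjective {A B C : ModuleCat.{u} R} (g : A ⟶ B) (f : A ⟶ C)
    (hg : Function.Surjective g) (h : ∀ a, g a = 0 → f a = 0) :
    ∃ h' : B ⟶ C, g ≫ h' = f := by
  have hle : LinearMap.ker g.hom ≤ LinearMap.ker f.hom := fun a ha => h a ha
  let e := LinearMap.quotKerEquivOfSurjective g.hom hg
  refine ⟨ModuleCat.ofHom (((LinearMap.ker g.hom).liftQ f.hom hle).comp (e.symm : B →ₗ[R] _)), ?_⟩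
  ext a
  have he : e (Submodule.Quotient.mk a) = g a := rfl
  have : e.symm (g a) = Submodule.Quotient.mk a := by
    rw [← he, LinearEquiv.symm_apply_apply]
  show ((LinearMap.ker g.hom).liftQ f.hom hle) (e.symm (g a)) = f a
  rw [this, Submodule.liftQ_apply]


/-- free cover -/
def fCov (N : ModuleCat.{u} R) : ModuleCat.{u} R := ModuleCat.of R (N →₀ R)

def fπ (N : ModuleCat.{u} R) : fCov N ⟶ N := ModuleCat.ofHom (Finsupp.linearCombination R id)

lemma fπ_surj (N : ModuleCat.{u} R) : Function.Surjective (fπ N) :=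
  Finsupp.linearCombination_id_surjective R N

instance fCov_projective (N : ModuleCat.{u} R) : Projective (fCov N) :=
  ModuleCat.projective_of_free (ι := N) Finsupp.basisSingleOne

/-- syzygy tower -/
def SZ (N : ModuleCat.{u} R) : ℕ → ModuleCat.{u} R
  | 0 => N
  | k+1 => ModuleCat.of R (LinearMap.ker (fπ (SZ N k)).hom)

def FR (N : ModuleCat.{u} R) (k : ℕ) : ModuleCat.{u} R := fCov (SZ N k)

def szι (N : ModuleCat.{u} R) (k : ℕ) : SZ N (k+1) ⟶ FR N k :=
  ModuleCat.ofHom (LinearMap.ker (fπ (SZ N k)).hom).subtype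

lemma szι_inj (N : ModuleCat.{u} R) (k : ℕ) : Function.Injective (szι N k) :=
  Subtype.val_injective

@[simp] lemma szι_fπ (N : ModuleCat.{u} R) (k : ℕ) (x : SZ N (k+1)) :
    fπ (SZ N k) (szι N k x) = 0 := x.2

def resd (N : ModuleCat.{u} R) (k : ℕ) : FR N (k+1) ⟶ FR N k :=
  fπ (SZ N (k+1)) ≫ szι N k

lemma resd_resd (N : ModuleCat.{u} R) (k : ℕ) : resd N (k+1) ≫ resd N k = 0 := by
  ext x
  show (szι N k) ((fπ (SZ N (k+1))) ((szι N (k+1)) ((fπ (SZ N (k+1+1))) x))) = 0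
  have : (fπ (SZ N (k+1))) ((szι N (k+1)) ((fπ (SZ N (k+1+1))) x)) = 0 := szι_fπ _ _ _
  rw [this]; simp


lemma resd_exact (N : ModuleCat.{u} R) (k : ℕ) (x : FR N (k+1))
    (hx : resd N k x = 0) : ∃ y : FR N (k+1+1), resd N (k+1) y = x := by
  have hx' : fπ (SZ N (k+1)) x = 0 := szι_inj N k (hx.trans (map_zero _).symm)
  obtain ⟨y, hy⟩ := fπ_surj (SZ N (k+1+1)) (⟨x, hx'⟩ : LinearMap.ker (fπ (SZ N (k+1))).hom)
  exact ⟨y, by show (szι N (k+1)) ((fπ (SZ N (k+1+1))) y) = x; rw [hy]; rfl⟩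

/-- the free resolution complex -/
def freeComplex (N : ModuleCat.{u} R) : ChainComplex (ModuleCat.{u} R) ℕ :=
  ChainComplex.of (FR N) (resd N) (resd_resd N)

@[simp] lemma freeComplex_X (N : ModuleCat.{u} R) (k : ℕ) : (freeComplex N).X k = FR N k := rfl

@[simp] lemma freeComplex_d (N : ModuleCat.{u} R) (k : ℕ) :
    (freeComplex N).d (k+1) k = resd N k := ChainComplex.of_d _ _ _


lemma exact_of_elems {A B C : ModuleCat.{u} R} (f : A ⟶ B) (g : B ⟶ C) (w : f ≫ g = 0)
    (h : ∀ b, g b = 0 → ∃ a, f a = b) : (ShortComplex.mk f g w).Exact :=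
  (ShortComplex.moduleCat_exact_iff _).2 h

lemma freeComplex_exactAt_succ (N : ModuleCat.{u} R) (n : ℕ) :
    (freeComplex N).ExactAt (n+1) := by
  rw [HomologicalComplex.exactAt_iff' _ (n+1+1) (n+1) n (by simp) (by simp)]
  rw [ShortComplex.moduleCat_exact_iff]
  intro x hx
  have hx' : resd N n x = 0 := by
    rw [← freeComplex_d N n]
    exact hx
  obtain ⟨y, hy⟩ := resd_exact N n x hx'
  refine ⟨y, ?_⟩
  show (freeComplex N).d (n+1+1) (n+1) y = x
  rw [freeComplex_d N (n+1)]
  exact hy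

lemma freeComplex_d10_fπ (N : ModuleCat.{u} R) :
    (freeComplex N).d 1 0 ≫ (fπ (SZ N 0) : FR N 0 ⟶ N) = 0 := by
  rw [show (freeComplex N).d 1 0 = resd N 0 from freeComplex_d N 0]
  ext x
  show (fπ (SZ N 0)) ((szι N 0) ((fπ (SZ N 1)) x)) = 0
  exact szι_fπ N 0 _

/-- the standard free resolution -/
def freeRes (N : ModuleCat.{u} R) : ProjectiveResolution N where
  complex := freeComplex N
  projective n := fCov_projective (SZ N n)
  π := (ChainComplex.toSingle₀Equiv _ _).symm ⟨(fπ (SZ N 0) : FR N 0 ⟶ N), freeComplex_d10_fπ N⟩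
  quasiIso := ⟨fun n => by
    cases n with
    | zero =>
      rw [ChainComplex.quasiIsoAt₀_iff, ShortComplex.quasiIso_iff_of_zeros']
      · refine (ShortComplex.exact_and_epi_g_iff_of_iso ?_).2
          ⟨exact_of_elems _ _ (freeComplex_d10_fπ N) ?_, ?_⟩
        · exact ShortComplex.isoMk (Iso.refl _) (Iso.refl _) (Iso.refl _)
            (by simp; rfl) (by simp [ChainComplex.toSingle₀Equiv]; rfl)
        · intro b hb
          have hb' : b ∈ LinearMap.ker (fπ (SZ N 0)).hom := hb
          obtain ⟨y, hy⟩ := fπ_surj (SZ N 1) (⟨b, hb'⟩ : LinearMap.ker (fπ (SZ N 0)).hom)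
          refine ⟨y, ?_⟩
          rw [show (freeComplex N).d 1 0 = resd N 0 from freeComplex_d N 0]
          show (szι N 0) ((fπ (SZ N 1)) y) = b
          rw [hy]; rfl
        · rw [ModuleCat.epi_iff_surjective]; exact fπ_surj N
      all_goals rfl
    | succ n =>
      rw [quasiIsoAt_iff_exactAt']
      · exact freeComplex_exactAt_succ N n
      · apply ChainComplex.exactAt_succ_single_obj⟩


/-- The key bridge: `Ext^{k+1}(N, A) = 0` iff maps from the `(k+1)`-st syzygy extend. -/
lemma bridge (N A : ModuleCat.{u} R) (k : ℕ) :
    extVanish R (k+1) N A ↔ ∀ u : SZ N (k+1) ⟶ A, ∃ v : FR N k ⟶ A, szι N k ≫ v = u := by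
  have e := ProjectiveResolution.isoExt (R := ℤ) (freeRes N) (k+1) A
  have h1 : extVanish R (k+1) N A ↔
      IsZero (((freeComplex N).linearYonedaObj ℤ A).homology (k+1)) := by
    rw [extVanish, subsingleton_iff_isZero]
    exact ⟨fun h => h.of_iso e.symm, fun h => h.of_iso e⟩
  have h2 : IsZero (((freeComplex N).linearYonedaObj ℤ A).homology (k+1)) ↔
      ((freeComplex N).linearYonedaObj ℤ A).ExactAt (k+1) :=
    (HomologicalComplex.exactAt_iff_isZero_homology _ _).symm
  rw [h1, h2, HomologicalComplex.exactAt_iff' _ k (k+1) (k+1+1) (by simp) (by simp),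
    ShortComplex.moduleCat_exact_iff]
  constructor
  · intro hex u
    have hf : (((freeComplex N).linearYonedaObj ℤ A).d (k+1) (k+1+1))
        ((fπ (SZ N (k+1)) ≫ u : FR N (k+1) ⟶ A)) = 0 := by
      show (freeComplex N).d (k+1+1) (k+1) ≫ (fπ (SZ N (k+1)) ≫ u) = 0
      rw [freeComplex_d]
      ext x
      show u ((fπ (SZ N (k+1))) ((szι N (k+1)) ((fπ (SZ N (k+1+1))) x))) = 0
      rw [szι_fπ]; simp
    obtain ⟨g0, hg⟩ := hex _ hf
    let g : FR N k ⟶ A := g0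
    refine ⟨g, ?_⟩
    have hg' : (freeComplex N).d (k+1) k ≫ g = fπ (SZ N (k+1)) ≫ u := hg
    rw [freeComplex_d] at hg'
    ext x
    obtain ⟨y, hy⟩ := fπ_surj (SZ N (k+1)) x
    have := congrArg (fun (m : FR N (k+1) ⟶ A) => m y) hg'
    simp only [ModuleCat.hom_comp, LinearMap.comp_apply] at this ⊢
    show g ((szι N k) x) = u x
    rw [← hy]
    exact this
  · intro hu f0 hf
    let f : FR N (k+1) ⟶ A := f0
    have hf' : resd N (k+1) ≫ f = 0 := by
      have : (freeComplex N).d (k+1+1) (k+1) ≫ f = 0 := hf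
      rwa [freeComplex_d] at this
    have hker : ∀ b, fπ (SZ N (k+1)) b = 0 → f b = 0 := by
      intro b hb
      obtain ⟨y, hy⟩ := fπ_surj (SZ N (k+1+1)) (⟨b, hb⟩ : LinearMap.ker (fπ (SZ N (k+1))).hom)
      have : (resd N (k+1)) y = b := by
        show (szι N (k+1)) ((fπ (SZ N (k+1+1))) y) = b
        rw [hy]; rfl
      rw [← this]
      exact congrArg (fun (m : FR N (k+1+1) ⟶ A) => m y) hf'
    obtain ⟨u, hufact⟩ := factor_thru_surjective (fπ (SZ N (k+1))) f (fπ_surj _) hker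
    obtain ⟨v, hv⟩ := hu u
    refine ⟨v, ?_⟩
    show (freeComplex N).d (k+1) k ≫ v = f
    rw [freeComplex_d]
    rw [← hufact, ← hv]
    rfl


lemma fCov_lift {E Z : ModuleCat.{u} R} (p : E ⟶ Z) (hp : Function.Surjective p)
    (N : ModuleCat.{u} R) (f : N ⟶ Z) : ∃ φ : fCov N ⟶ E, φ ≫ p = fπ N ≫ f := by
  refine ⟨ModuleCat.ofHom (Finsupp.linearCombination R (fun x => Classical.choose (hp (f x)))), ?_⟩
  refine ModuleCat.hom_ext (Finsupp.lhom_ext fun x b => ?_)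
  show p ((Finsupp.linearCombination R fun x => Classical.choose (hp (f x)))
      (Finsupp.single x b)) = f (fπ N (Finsupp.single x b))
  rw [Finsupp.linearCombination_single]
  have h1 : (fπ N) (Finsupp.single x b) = b • x := by
    show (Finsupp.linearCombination R id) (Finsupp.single x b) = b • x
    rw [Finsupp.linearCombination_single]; rfl
  rw [h1, map_smul, map_smul, Classical.choose_spec (hp (f x))]

section ExtLemmas

variable {Y E Z A B X : ModuleCat.{u} R}

/-- build a linear `χ` with `ι ∘ χ = φ₀` when `φ₀` lands in the range of the injection `ι`. -/
lemma corestrict {K : ModuleCat.{u} R} (ι : Y ⟶ E) (hι : Function.Injective ι)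
    (φ₀ : K ⟶ E) (h : ∀ x, ∃ y, ι y = φ₀ x) : ∃ χ : K ⟶ Y, ∀ x, ι (χ x) = φ₀ x := by
  let eι := LinearEquiv.ofInjective ι.hom hι
  have hmem : ∀ x, φ₀ x ∈ LinearMap.range ι.hom := fun x => by
    obtain ⟨y, hy⟩ := h x; exact ⟨y, hy⟩
  let φ' : K →ₗ[R] LinearMap.range ι.hom :=
    LinearMap.codRestrict _ φ₀.hom hmem
  refine ⟨ModuleCat.ofHom ((eι.symm : _ →ₗ[R] _).comp φ'), fun x => ?_⟩
  show ι (eι.symm (φ' x)) = φ₀ x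
  have : eι (eι.symm (φ' x)) = φ' x := eι.apply_symm_apply _
  have h2 := congrArg Subtype.val this
  rwa [LinearEquiv.ofInjective_apply] at h2

/-- Extend a map along a monomorphism whose cokernel has vanishing `Ext¹` against the target. -/
lemma ext_extend (ι : Y ⟶ E) (p : E ⟶ Z)
    (hι : Function.Injective ι) (hp : Function.Surjective p)
    (hex : ∀ e, p e = 0 → ∃ y, ι y = e) (hw : ∀ y, p (ι y) = 0)
    (hvan : extVanish R 1 Z A) (u : Y ⟶ A) : ∃ v : E ⟶ A, ι ≫ v = u := by
  obtain ⟨φ, hφ⟩ := fCov_lift p hp Z (𝟙 Z)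
  have hφ' : ∀ w, p (φ w) = fπ Z w := fun w => by
    have := congrArg (fun (m : fCov Z ⟶ Z) => m w) hφ
    simpa using this
  obtain ⟨χ, hχ⟩ := corestrict ι hι (szι Z 0 ≫ φ) (fun x => hex _ (by
    show p (φ (szι Z 0 x)) = 0
    rw [hφ' (szι Z 0 x)]
    exact szι_fπ Z 0 x))
  obtain ⟨ψ, hψ⟩ := (bridge Z A 0).mp hvan ((χ : SZ Z 1 ⟶ Y) ≫ u)
  have hψ' : ∀ x : SZ Z 1, ψ (szι Z 0 x) = u (χ x) := fun x =>
    congrArg (fun (m : SZ Z 1 ⟶ A) => m x) hψ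
  let P := ModuleCat.of R (↑(fCov Z) × ↑Y)
  let σ : P ⟶ E := ModuleCat.ofHom (φ.hom.coprod ι.hom)
  let τ : P ⟶ A := ModuleCat.ofHom (ψ.hom.coprod u.hom)
  have hσ : Function.Surjective σ := by
    intro e
    obtain ⟨w, hwZ⟩ := fπ_surj Z (p e)
    have : p (e - φ w) = 0 := by rw [map_sub, hφ' w, hwZ, sub_self]
    obtain ⟨y, hy⟩ := hex _ this
    exact ⟨(w, y), by show φ w + ι y = e; rw [hy]; abel⟩
  have hkerστ : ∀ x : P, σ x = 0 → τ x = 0 := by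
    rintro ⟨w, y⟩ hσ0
    have hσ0' : φ w + ι y = 0 := hσ0
    have h1 : φ w = ι (-y) := by rw [map_neg]; exact eq_neg_of_add_eq_zero_left hσ0'
    have hw0 : fπ (SZ Z 0) w = 0 := by
      have : p (φ w) = 0 := by rw [h1]; exact hw _
      rwa [hφ' w] at this
    let x : SZ Z 1 := ⟨w, hw0⟩
    have hx1 : szι Z 0 x = w := rfl
    have hχx : χ x = -y := hι (by
      rw [hχ x]
      show φ (szι Z 0 x) = ι (-y)
      rw [hx1]
      exact h1)
    show ψ w + u y = 0
    have : ψ w = u (χ x) := by rw [← hx1]; exact hψ' x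
    rw [this, hχx, map_neg, neg_add_cancel]
  obtain ⟨v, hv⟩ := factor_thru_surjective σ τ hσ hkerστ
  refine ⟨v, ?_⟩
  ext y
  have := congrArg (fun (m : P ⟶ A) => m (0, y)) hv
  simp only [ModuleCat.hom_comp, LinearMap.comp_apply] at this
  show v (ι y) = u y
  have hσ0y : σ (0, y) = ι y := by show φ 0 + ι y = ι y; rw [map_zero, zero_add]
  have hτ0y : τ (0, y) = u y := by show ψ 0 + u y = u y; rw [map_zero, zero_add]
  rw [← hσ0y, ← hτ0y]
  exact this


/-- Lift a map along an epimorphism whose kernel has vanishing `Ext¹` against the source. -/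
lemma ext_lift (a : A ⟶ E) (p : E ⟶ B)
    (ha : Function.Injective a) (hp : Function.Surjective p)
    (hex : ∀ e, p e = 0 → ∃ x, a x = e) (hw : ∀ x, p (a x) = 0)
    (hvan : extVanish R 1 X A) (f : X ⟶ B) : ∃ g : X ⟶ E, g ≫ p = f := by
  obtain ⟨φ, hφ⟩ := fCov_lift p hp (SZ X 0) f
  have hφ' : ∀ w, p (φ w) = f (fπ (SZ X 0) w) := fun w =>
    congrArg (fun (m : FR X 0 ⟶ B) => m w) hφ
  obtain ⟨χ, hχ⟩ := corestrict a ha (szι X 0 ≫ φ) (fun x => hex _ (by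
    show p (φ (szι X 0 x)) = 0
    rw [hφ' (szι X 0 x)]
    have : fπ (SZ X 0) (szι X 0 x) = 0 := szι_fπ X 0 x
    rw [this]; exact map_zero _))
  obtain ⟨ψ, hψ⟩ := (bridge X A 0).mp hvan (χ : SZ X 1 ⟶ A)
  have hψ' : ∀ x : SZ X 1, ψ (szι X 0 x) = χ x := fun x =>
    congrArg (fun (m : SZ X 1 ⟶ A) => m x) hψ
  let h' : FR X 0 ⟶ E := (show FR X 0 ⟶ E from φ) - (ψ ≫ a)
  have h'app : ∀ w, h' w = φ w - a (ψ w) := fun w => rfl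
  have hker : ∀ w, fπ (SZ X 0) w = 0 → h' w = 0 := by
    intro w hw0
    let x : SZ X 1 := ⟨w, hw0⟩
    rw [h'app w]
    have h1 : ψ w = χ x := hψ' x
    have h2 : a (χ x) = φ w := hχ x
    rw [h1, h2, sub_self]
  obtain ⟨g, hg⟩ := factor_thru_surjective (fπ (SZ X 0)) h' (fπ_surj (SZ X 0)) hker
  have hg' : ∀ w, g (fπ (SZ X 0) w) = h' w := fun w =>
    congrArg (fun (m : FR X 0 ⟶ E) => m w) hg
  refine ⟨(g : X ⟶ E), ?_⟩
  ext x0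
  obtain ⟨w, hwx⟩ := fπ_surj (SZ X 0) x0
  show p (g x0) = f x0
  rw [← hwx, hg' w, h'app w]
  rw [map_sub, hφ' w, hw (ψ w), sub_zero]


/-- `Ext¹(-,A)`-vanishing is closed under extensions. -/
lemma ext_closure {M' Y X' A : ModuleCat.{u} R} (i : M' ⟶ Y) (q : Y ⟶ X')
    (hi : Function.Injective i) (hq : Function.Surjective q)
    (hexq : ∀ y, q y = 0 → ∃ m, i m = y) (hwq : ∀ m, q (i m) = 0)
    (hM' : extVanish R 1 M' A) (hX' : extVanish R 1 X' A) :
    extVanish R 1 Y A := by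
  refine (bridge Y A 0).mpr ?_
  intro u
  -- the pushout E of the syzygy sequence of `Y` along `u`
  set F := FR Y 0
  set incl : SZ Y 1 ⟶ F := szι Y 0 with hincl
  set π : F ⟶ Y := (fπ (SZ Y 0) : F ⟶ Y) with hπ
  set D : Submodule R (↑F × ↑A) :=
    LinearMap.range (incl.hom.prod (-u.hom)) with hD
  let E : ModuleCat.{u} R := ModuleCat.of R ((↑F × ↑A) ⧸ D)
  let mk : (↑F × ↑A) →ₗ[R] E := D.mkQ
  let aE : A ⟶ E := ModuleCat.ofHom (mk.comp (LinearMap.inr R ↑F ↑A))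
  have hkillD : ∀ x ∈ D, π.hom.comp (LinearMap.fst R ↑F ↑A) x = 0 := by
    rintro x ⟨k, rfl⟩
    show π (incl k) = 0
    exact szι_fπ Y 0 k
  let qE : E ⟶ Y := ModuleCat.ofHom (D.liftQ (π.hom.comp (LinearMap.fst R ↑F ↑A)) hkillD)
  have hqEmk : ∀ w x, qE (mk (w, x)) = π w := fun w x => rfl
  have haE : Function.Injective aE := by
    intro x x' hxx'
    have : aE (x - x') = 0 := by rw [map_sub, hxx', sub_self]
    have hmem : ((0 : F), x - x') ∈ D := by
      rwa [← Submodule.Quotient.mk_eq_zero D]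
    obtain ⟨k, hk⟩ := hmem
    have hk1 : incl k = 0 := congrArg Prod.fst hk
    have hk0 : k = 0 := szι_inj Y 0 (by rw [hk1]; rfl)
    have hk2 : -(u k) = x - x' := congrArg Prod.snd hk
    rw [hk0] at hk2
    simp only [map_zero, neg_zero] at hk2
    exact sub_eq_zero.mp hk2.symm
  have hqE : Function.Surjective qE := by
    intro y
    obtain ⟨w, hw⟩ := fπ_surj (SZ Y 0) y
    exact ⟨mk (w, 0), hw⟩
  have hexE : ∀ e, qE e = 0 → ∃ x, aE x = e := by
    intro e he
    obtain ⟨⟨w, x⟩, rfl⟩ := D.mkQ_surjective e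
    have hw0 : fπ (SZ Y 0) w = 0 := he
    let k : SZ Y 1 := ⟨w, hw0⟩
    refine ⟨x + u k, ?_⟩
    show mk (0, x + u k) = mk (w, x)
    rw [← sub_eq_zero, ← map_sub]
    refine (Submodule.Quotient.mk_eq_zero D).mpr ⟨-k, ?_⟩
    have h1 : incl (-k) = -w := by rw [map_neg]; rfl
    have h2 : (-u.hom) (-k) = u k := by
      rw [LinearMap.neg_apply, map_neg, neg_neg]
    show (incl (-k), (-u.hom) (-k)) = (0, x + u k) - (w, x)
    rw [h1, h2]
    show (-w, u k) = (0 - w, x + u k - x)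
    rw [zero_sub, add_sub_cancel_left]
  have hwE : ∀ x, qE (aE x) = 0 := fun x => rfl
  -- lift `i` through `qE`
  obtain ⟨t, ht⟩ := ext_lift aE qE haE hqE hexE hwE hM' i
  have ht' : ∀ m, qE (t m) = i m := fun m => congrArg (fun (f : M' ⟶ Y) => f m) ht
  -- quotient by the image of `t`
  set T : Submodule R E := LinearMap.range t.hom with hT
  let Fm : ModuleCat.{u} R := ModuleCat.of R (↑E ⧸ T)
  let aF : A ⟶ Fm := ModuleCat.ofHom (T.mkQ.comp aE.hom)
  have hkillT : ∀ x ∈ T, q.hom.comp qE.hom x = 0 := by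
    rintro x ⟨m, rfl⟩
    show q (qE (t m)) = 0
    rw [ht' m]
    exact hwq m
  let pZ : Fm ⟶ X' := ModuleCat.ofHom (T.liftQ (q.hom.comp qE.hom) hkillT)
  have hpZmk : ∀ e, pZ (T.mkQ e) = q (qE e) := fun e => rfl
  have haF : Function.Injective aF := by
    intro x x' hxx'
    have : aF (x - x') = 0 := by rw [map_sub, hxx', sub_self]
    have hmem : aE (x - x') ∈ T := by
      rwa [← Submodule.Quotient.mk_eq_zero T]
    obtain ⟨m, hm⟩ := hmem
    have h1 : i m = 0 := by rw [← ht' m, hm, hwE]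
    have hm0 : m = 0 := hi (by rw [h1, map_zero])
    rw [hm0, map_zero] at hm
    have : aE (x - x') = aE 0 := by rw [map_zero, ← hm]
    exact sub_eq_zero.mp (haE this)
  have hpZ : Function.Surjective pZ := by
    intro x'
    obtain ⟨y, hy⟩ := hq x'
    obtain ⟨e, he⟩ := hqE y
    exact ⟨T.mkQ e, by rw [hpZmk, he, hy]⟩
  have hexF : ∀ w, pZ w = 0 → ∃ x, aF x = w := by
    intro w hw
    obtain ⟨e, rfl⟩ := T.mkQ_surjective w
    rw [hpZmk] at hw
    obtain ⟨m, hm⟩ := hexq _ hw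
    have : qE (e - t m) = 0 := by rw [map_sub, ht' m, hm, sub_self]
    obtain ⟨x, hx⟩ := hexE _ this
    refine ⟨x, ?_⟩
    show T.mkQ (aE x) = T.mkQ e
    rw [hx, map_sub]
    have hz : T.mkQ (t m) = 0 := (Submodule.Quotient.mk_eq_zero T).mpr ⟨m, rfl⟩
    rw [hz, sub_zero]
  have hwF : ∀ x, pZ (aF x) = 0 := fun x => by
    show q (qE (aE x)) = 0
    rw [hwE x, map_zero]
  obtain ⟨r', hr'⟩ := ext_extend aF pZ haF hpZ hexF hwF hX' (𝟙 A)
  have hr'' : ∀ x, r' (aF x) = x := fun x => congrArg (fun (f : A ⟶ A) => f x) hr'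
  refine ⟨show F ⟶ A from ModuleCat.ofHom (
    r'.hom.comp (T.mkQ.comp (mk.comp (LinearMap.inl R ↑F ↑A)))), ?_⟩
  ext k
  show r' (T.mkQ (mk (incl k, 0))) = u k
  have hkey : mk (incl k, 0) = aE (u k) := by
    have haEuk : aE (u k) = mk (0, u k) := rfl
    rw [haEuk, ← sub_eq_zero, ← map_sub]
    refine (Submodule.Quotient.mk_eq_zero D).mpr ⟨k, ?_⟩
    show (incl k, (-u.hom) k) = (incl k, 0) - (0, u k)
    show (incl k, -(u k)) = (incl k - 0, 0 - u k)
    rw [sub_zero, zero_sub]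
  rw [hkey]
  exact hr'' (u k)
end ExtLemmas

section Build

variable (Yf Xf : ModuleCat.{u} R → ModuleCat.{u} R)
variable (ff : ∀ K, K ⟶ Yf K) (gf : ∀ K, Yf K ⟶ Xf K)
variable (M : ModuleCat.{u} R)

/-- the tower of cosyzygies -/
def rK : ℕ → ModuleCat.{u} R := fun n => Nat.rec M (fun _ K => Xf K) n

/-- the objects of the totally acyclic complex -/
def cX : ℤ → ModuleCat.{u} R := fun n =>
  Int.rec (fun k => Yf (rK Xf M k)) (fun k => FR M k) n

/-- the differentials of the totally acyclic complex -/
def cd : ∀ n : ℤ, cX Yf Xf M n ⟶ cX Yf Xf M (n+1) := fun n =>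
  match n with
  | Int.ofNat k => gf (rK Xf M k) ≫ ff (rK Xf M (k+1))
  | Int.negSucc 0 =>
      (fπ (SZ M 0) ≫ (ff M : M ⟶ Yf M) : FR M 0 ⟶ Yf (rK Xf M 0))
  | Int.negSucc (k+1) => resd M k

lemma cd_sq (hw : ∀ K m, gf K (ff K m) = 0) :
    ∀ n : ℤ, cd Yf Xf ff gf M n ≫ cd Yf Xf ff gf M (n+1) = 0 := by
  intro n
  match n with
  | Int.ofNat k =>
    show (gf (rK Xf M k) ≫ ff (rK Xf M (k+1)))
      ≫ (gf (rK Xf M (k+1)) ≫ ff (rK Xf M (k+2))) = 0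
    ext x
    show ff (rK Xf M (k+2)) (gf (rK Xf M (k+1)) (ff (rK Xf M (k+1)) (gf (rK Xf M k) x))) = 0
    erw [hw, map_zero]
  | Int.negSucc 0 =>
    show (fπ (SZ M 0) ≫ (ff M : M ⟶ Yf M)) ≫ (gf (rK Xf M 0) ≫ ff (rK Xf M 1)) = 0
    ext x
    show ff (rK Xf M 1) (gf M (ff M (fπ (SZ M 0) x))) = 0
    erw [hw, map_zero]
  | Int.negSucc 1 =>
    show resd M 0 ≫ (fπ (SZ M 0) ≫ (ff M : M ⟶ Yf M)) = 0
    ext x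
    show ff M (fπ (SZ M 0) (szι M 0 (fπ (SZ M 1) x))) = 0
    erw [szι_fπ, map_zero]
  | Int.negSucc (k+2) =>
    show resd M (k+1) ≫ resd M k = 0
    exact resd_resd M k

/-- the totally acyclic complex -/
def bigComplex (hw : ∀ K m, gf K (ff K m) = 0) : CochainComplex (ModuleCat.{u} R) ℤ :=
  CochainComplex.of (cX Yf Xf M) (cd Yf Xf ff gf M) (cd_sq Yf Xf ff gf M hw)

end Build

end GorTest

/-- if `(𝒞, 𝒲)` is a complete hereditary cotorsion pair with
`𝒞 ∩ 𝒲` the projectives and all level modules in `𝒲`, then every `M ∈ 𝒞` is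
Gorenstein AC-projective. -/
theorem stmt_15 (R : Type u) [Ring R] (𝒞 𝒲 : ModuleCat.{u} R → Prop)
    -- cotorsion pair orthogonality
    (horth₁ : ∀ A, 𝒲 A ↔ ∀ X, 𝒞 X → extVanish R 1 X A)
    (horth₂ : ∀ X, 𝒞 X ↔ ∀ A, 𝒲 A → extVanish R 1 X A)
    -- completeness: enough injectives and enough projectives
    (hcomp₁ : ∀ M : ModuleCat.{u} R,
      ∃ (Y X : ModuleCat.{u} R) (f : M ⟶ Y) (g : Y ⟶ X) (w : f ≫ g = 0),
        (ShortComplex.mk f g w).ShortExact ∧ 𝒲 Y ∧ 𝒞 X)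
    (hcomp₂ : ∀ M : ModuleCat.{u} R,
      ∃ (Y X : ModuleCat.{u} R) (f : Y ⟶ X) (g : X ⟶ M) (w : f ≫ g = 0),
        (ShortComplex.mk f g w).ShortExact ∧ 𝒲 Y ∧ 𝒞 X)
    -- hereditary
    (hher : ∀ i, 1 ≤ i → ∀ X A, 𝒞 X → 𝒲 A → extVanish R i X A)
    -- 𝒞 ∩ 𝒲 = projectives
    (hproj : ∀ X, (𝒞 X ∧ 𝒲 X) ↔ Projective X)
    -- all level modules lie in 𝒲
    (hlev : ∀ L, IsLevel R L → 𝒲 L)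
    (M : ModuleCat.{u} R) (hM : 𝒞 M) :
    IsGorACProj R M := by
  classical
  choose Yf Xf ff gf wf hsef hYw hXc using hcomp₁
  have hfinj : ∀ K, Function.Injective (ff K) := fun K =>
    (ModuleCat.mono_iff_injective (ff K)).1 (hsef K).mono_f
  have hgsurj : ∀ K, Function.Surjective (gf K) := fun K =>
    (ModuleCat.epi_iff_surjective (gf K)).1 (hsef K).epi_g
  have hexactK : ∀ K y, gf K y = 0 → ∃ m, ff K m = y := fun K =>
    (ShortComplex.moduleCat_exact_iff _).1 (hsef K).exact
  have hwapp : ∀ K m, gf K (ff K m) = 0 := fun K m => by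
    have h := congrArg (fun (h : K ⟶ Xf K) => h m) (wf K)
    simpa using h
  have hrKC : ∀ n, 𝒞 (GorTest.rK Xf M n) := fun n => by
    induction n with
    | zero => exact hM
    | succ n ih => exact hXc (GorTest.rK Xf M n)
  have hYC : ∀ K, 𝒞 K → 𝒞 (Yf K) := fun K hK => (horth₂ (Yf K)).mpr (fun A hA =>
    GorTest.ext_closure (ff K) (gf K) (hfinj K) (hgsurj K) (hexactK K) (hwapp K)
      ((horth₁ A).mp hA K hK) ((horth₁ A).mp hA (Xf K) (hXc K)))
  have hYproj : ∀ n, Projective (Yf (GorTest.rK Xf M n)) := fun n =>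
    (hproj (Yf (GorTest.rK Xf M n))).mp ⟨hYC _ (hrKC n), hYw _⟩
  have hvanK : ∀ (L : ModuleCat.{u} R), IsLevel R L →
      ∀ k, extVanish R 1 (GorTest.rK Xf M k) L :=
    fun L hL k => (horth₁ L).mp (hlev L hL) _ (hrKC k)
  refine ⟨(GorTest.bigComplex Yf Xf ff gf M hwapp), ?_, ?_, ?_, ?_⟩
  · -- projectivity
    intro n
    match n with
    | Int.ofNat k => exact hYproj k
    | Int.negSucc k => exact GorTest.fCov_projective (GorTest.SZ M k)
  · -- exactness
    intro n
    match n with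
    | Int.ofNat 0 =>
      rw [HomologicalComplex.exactAt_iff' (GorTest.bigComplex Yf Xf ff gf M hwapp) (Int.negSucc 0) (Int.ofNat 0) (Int.ofNat 1)
        ((ComplexShape.up ℤ).prev_eq' rfl) ((ComplexShape.up ℤ).next_eq' rfl),
        ShortComplex.moduleCat_exact_iff]
      intro x hx
      have hdj : (GorTest.bigComplex Yf Xf ff gf M hwapp).d (Int.ofNat 0) (Int.ofNat 1) = GorTest.cd Yf Xf ff gf M (Int.ofNat 0) :=
        CochainComplex.of_d _ _ (Int.ofNat 0)
      have hx2 : (GorTest.bigComplex Yf Xf ff gf M hwapp).d (Int.ofNat 0) (Int.ofNat 1) x = 0 := hx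
      rw [hdj] at hx2
      have h1 : ff (GorTest.rK Xf M 1) (gf (GorTest.rK Xf M 0) x) = 0 := hx2
      have h2 : gf (GorTest.rK Xf M 0) x = 0 := hfinj (GorTest.rK Xf M 1) (by rw [h1]; exact (map_zero _).symm)
      obtain ⟨m, hm⟩ := hexactK (GorTest.rK Xf M 0) x h2
      obtain ⟨w, hw2⟩ := GorTest.fπ_surj (GorTest.SZ M 0) m
      refine ⟨w, ?_⟩
      show (GorTest.bigComplex Yf Xf ff gf M hwapp).d (Int.negSucc 0) (Int.ofNat 0) w = x
      have hdi : (GorTest.bigComplex Yf Xf ff gf M hwapp).d (Int.negSucc 0) (Int.ofNat 0) = GorTest.cd Yf Xf ff gf M (Int.negSucc 0) :=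
        CochainComplex.of_d _ _ (Int.negSucc 0)
      rw [hdi]
      show ff M (GorTest.fπ (GorTest.SZ M 0) w) = x
      rw [hw2]; exact hm
    | Int.ofNat (k+1) =>
      rw [HomologicalComplex.exactAt_iff' (GorTest.bigComplex Yf Xf ff gf M hwapp) (Int.ofNat k) (Int.ofNat (k+1)) (Int.ofNat (k+2))
        ((ComplexShape.up ℤ).prev_eq' rfl) ((ComplexShape.up ℤ).next_eq' rfl),
        ShortComplex.moduleCat_exact_iff]
      intro x hx
      have hdj : (GorTest.bigComplex Yf Xf ff gf M hwapp).d (Int.ofNat (k+1)) (Int.ofNat (k+2)) = GorTest.cd Yf Xf ff gf M (Int.ofNat (k+1)) :=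
        CochainComplex.of_d _ _ (Int.ofNat (k+1))
      have hx2 : (GorTest.bigComplex Yf Xf ff gf M hwapp).d (Int.ofNat (k+1)) (Int.ofNat (k+2)) x = 0 := hx
      rw [hdj] at hx2
      have h1 : ff (GorTest.rK Xf M (k+2)) (gf (GorTest.rK Xf M (k+1)) x) = 0 := hx2
      have h2 : gf (GorTest.rK Xf M (k+1)) x = 0 := hfinj (GorTest.rK Xf M (k+2)) (by rw [h1]; exact (map_zero _).symm)
      obtain ⟨m, hm⟩ := hexactK (GorTest.rK Xf M (k+1)) x h2
      obtain ⟨y, hy⟩ := hgsurj (GorTest.rK Xf M k) m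
      refine ⟨y, ?_⟩
      show (GorTest.bigComplex Yf Xf ff gf M hwapp).d (Int.ofNat k) (Int.ofNat (k+1)) y = x
      have hdi : (GorTest.bigComplex Yf Xf ff gf M hwapp).d (Int.ofNat k) (Int.ofNat (k+1)) = GorTest.cd Yf Xf ff gf M (Int.ofNat k) :=
        CochainComplex.of_d _ _ (Int.ofNat k)
      rw [hdi]
      show ff (GorTest.rK Xf M (k+1)) (gf (GorTest.rK Xf M k) y) = x
      rw [hy]; exact hm
    | Int.negSucc 0 =>
      rw [HomologicalComplex.exactAt_iff' (GorTest.bigComplex Yf Xf ff gf M hwapp) (Int.negSucc 1) (Int.negSucc 0) (Int.ofNat 0)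
        ((ComplexShape.up ℤ).prev_eq' rfl) ((ComplexShape.up ℤ).next_eq' rfl),
        ShortComplex.moduleCat_exact_iff]
      intro x hx
      have hdj : (GorTest.bigComplex Yf Xf ff gf M hwapp).d (Int.negSucc 0) (Int.ofNat 0) = GorTest.cd Yf Xf ff gf M (Int.negSucc 0) :=
        CochainComplex.of_d _ _ (Int.negSucc 0)
      have hx2 : (GorTest.bigComplex Yf Xf ff gf M hwapp).d (Int.negSucc 0) (Int.ofNat 0) x = 0 := hx
      rw [hdj] at hx2
      have h1 : ff M (GorTest.fπ (GorTest.SZ M 0) x) = 0 := hx2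
      have h2 : GorTest.fπ (GorTest.SZ M 0) x = 0 := hfinj M (by rw [h1]; exact (map_zero _).symm)
      obtain ⟨y, hy⟩ := GorTest.fπ_surj (GorTest.SZ M 1)
        (⟨x, h2⟩ : LinearMap.ker (GorTest.fπ (GorTest.SZ M 0)).hom)
      refine ⟨y, ?_⟩
      show (GorTest.bigComplex Yf Xf ff gf M hwapp).d (Int.negSucc 1) (Int.negSucc 0) y = x
      have hdi : (GorTest.bigComplex Yf Xf ff gf M hwapp).d (Int.negSucc 1) (Int.negSucc 0) = GorTest.cd Yf Xf ff gf M (Int.negSucc 1) :=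
        CochainComplex.of_d _ _ (Int.negSucc 1)
      rw [hdi]
      show GorTest.szι M 0 (GorTest.fπ (GorTest.SZ M 1) y) = x
      rw [hy]; rfl
    | Int.negSucc (k+1) =>
      rw [HomologicalComplex.exactAt_iff' (GorTest.bigComplex Yf Xf ff gf M hwapp) (Int.negSucc (k+2)) (Int.negSucc (k+1))
        (Int.negSucc k)
        ((ComplexShape.up ℤ).prev_eq' rfl) ((ComplexShape.up ℤ).next_eq' rfl),
        ShortComplex.moduleCat_exact_iff]
      intro x hx
      have hdj : (GorTest.bigComplex Yf Xf ff gf M hwapp).d (Int.negSucc (k+1)) (Int.negSucc k) = GorTest.cd Yf Xf ff gf M (Int.negSucc (k+1)) :=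
        CochainComplex.of_d _ _ (Int.negSucc (k+1))
      have hx2 : (GorTest.bigComplex Yf Xf ff gf M hwapp).d (Int.negSucc (k+1)) (Int.negSucc k) x = 0 := hx
      rw [hdj] at hx2
      have hx3 : GorTest.resd M k x = 0 := hx2
      obtain ⟨y, hy⟩ := GorTest.resd_exact M k x hx3
      refine ⟨y, ?_⟩
      show (GorTest.bigComplex Yf Xf ff gf M hwapp).d (Int.negSucc (k+2)) (Int.negSucc (k+1)) y = x
      have hdi : (GorTest.bigComplex Yf Xf ff gf M hwapp).d (Int.negSucc (k+2)) (Int.negSucc (k+1)) = GorTest.cd Yf Xf ff gf M (Int.negSucc (k+2)) :=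
        CochainComplex.of_d _ _ (Int.negSucc (k+2))
      rw [hdi]
      exact hy
  · -- factorization against level modules
    intro L hL n f h0
    match n, f, h0 with
    | Int.ofNat k, f, h0 =>
      have hkill : ∀ m, f (ff (GorTest.rK Xf M k) m) = 0 := by
        match k, f, h0 with
        | 0, f, h0 =>
          have hdi : (GorTest.bigComplex Yf Xf ff gf M hwapp).d ((Int.ofNat 0) - 1) (Int.ofNat 0) = GorTest.cd Yf Xf ff gf M (Int.negSucc 0) :=
            CochainComplex.of_d _ _ (Int.negSucc 0)
          rw [hdi] at h0
          intro m
          obtain ⟨w, hw2⟩ := GorTest.fπ_surj (GorTest.SZ M 0) m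
          have h := congrArg (fun (t : GorTest.FR M 0 ⟶ L) => t w) h0
          simp only [ModuleCat.hom_comp, LinearMap.comp_apply] at h
          have h' : f (ff M (GorTest.fπ (GorTest.SZ M 0) w)) = 0 := h
          rwa [hw2] at h'
        | k+1, f, h0 =>
          have e1 : (Int.ofNat (k+1)) - 1 = Int.ofNat k := by
            show ((k+1 : ℕ) : ℤ) - 1 = (k : ℕ)
            push_cast
            ring
          rw [e1] at h0
          have hdi : (GorTest.bigComplex Yf Xf ff gf M hwapp).d (Int.ofNat k) (Int.ofNat (k+1)) = GorTest.cd Yf Xf ff gf M (Int.ofNat k) :=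
            CochainComplex.of_d _ _ (Int.ofNat k)
          rw [hdi] at h0
          intro m
          obtain ⟨y, hy⟩ := hgsurj (GorTest.rK Xf M k) m
          have h := congrArg (fun (t : Yf (GorTest.rK Xf M k) ⟶ L) => t y) h0
          simp only [ModuleCat.hom_comp, LinearMap.comp_apply] at h
          have h' : f (ff (GorTest.rK Xf M (k+1)) (gf (GorTest.rK Xf M k) y)) = 0 := h
          rwa [hy] at h'
      obtain ⟨fbar, hfbar⟩ := GorTest.factor_thru_surjective (gf (GorTest.rK Xf M k)) f
        (hgsurj _) (fun a ha => by
          obtain ⟨m, hm⟩ := hexactK (GorTest.rK Xf M k) a ha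
          rw [← hm]; exact hkill m)
      have hfbarapp : ∀ a, fbar (gf (GorTest.rK Xf M k) a) = f a := fun a =>
        congrArg (fun (m : Yf (GorTest.rK Xf M k) ⟶ L) => m a) hfbar
      obtain ⟨v, hv⟩ := GorTest.ext_extend (ff (GorTest.rK Xf M (k+1)))
        (gf (GorTest.rK Xf M (k+1))) (hfinj _) (hgsurj _) (hexactK _) (hwapp _)
        (hvanK L hL (k+2)) fbar
      have hvapp : ∀ m, v (ff (GorTest.rK Xf M (k+1)) m) = fbar m := fun m =>
        congrArg (fun (w : GorTest.rK Xf M (k+1) ⟶ L) => w m) hv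
      refine ⟨v, ?_⟩
      have hdn : (GorTest.bigComplex Yf Xf ff gf M hwapp).d (Int.ofNat k) (Int.ofNat k + 1) = GorTest.cd Yf Xf ff gf M (Int.ofNat k) :=
        CochainComplex.of_d _ _ (Int.ofNat k)
      rw [hdn]
      ext x
      show f x = v (ff (GorTest.rK Xf M (k+1)) (gf (GorTest.rK Xf M k) x))
      exact ((hvapp _).trans (hfbarapp x)).symm
    | Int.negSucc 0, f, h0 =>
      have hdi : (GorTest.bigComplex Yf Xf ff gf M hwapp).d ((Int.negSucc 0) - 1) (Int.negSucc 0) = GorTest.cd Yf Xf ff gf M (Int.negSucc 1) :=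
        CochainComplex.of_d _ _ (Int.negSucc 1)
      rw [hdi] at h0
      have hkill : ∀ b, GorTest.fπ (GorTest.SZ M 0) b = 0 → f b = 0 := by
        intro b hb
        obtain ⟨y, hy⟩ := GorTest.fπ_surj (GorTest.SZ M 1)
          (⟨b, hb⟩ : LinearMap.ker (GorTest.fπ (GorTest.SZ M 0)).hom)
        have h := congrArg (fun (t : GorTest.FR M 1 ⟶ L) => t y) h0
        simp only [ModuleCat.hom_comp, LinearMap.comp_apply] at h
        have h' : f (GorTest.szι M 0 (GorTest.fπ (GorTest.SZ M 1) y)) = 0 := h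
        rw [hy] at h'
        exact h'
      obtain ⟨fbar, hfbar⟩ := GorTest.factor_thru_surjective
        (GorTest.fπ (GorTest.SZ M 0)) f (GorTest.fπ_surj _) hkill
      have hfbarapp : ∀ a, fbar (GorTest.fπ (GorTest.SZ M 0) a) = f a := fun a =>
        congrArg (fun (m : GorTest.FR M 0 ⟶ L) => m a) hfbar
      obtain ⟨v, hv⟩ := GorTest.ext_extend (ff M) (gf M)
        (hfinj _) (hgsurj _) (hexactK _) (hwapp _) (hvanK L hL 1)
        (fbar : M ⟶ L)
      have hvapp : ∀ m, v (ff M m) = fbar m := fun m =>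
        congrArg (fun (w : M ⟶ L) => w m) hv
      refine ⟨v, ?_⟩
      have hdn : (GorTest.bigComplex Yf Xf ff gf M hwapp).d (Int.negSucc 0) (Int.negSucc 0 + 1) = GorTest.cd Yf Xf ff gf M (Int.negSucc 0) :=
        CochainComplex.of_d _ _ (Int.negSucc 0)
      rw [hdn]
      ext x
      show f x = v (ff M (GorTest.fπ (GorTest.SZ M 0) x))
      exact ((hvapp _).trans (hfbarapp x)).symm
    | Int.negSucc (k+1), f, h0 =>
      have hdi : (GorTest.bigComplex Yf Xf ff gf M hwapp).d ((Int.negSucc (k+1)) - 1) (Int.negSucc (k+1)) = GorTest.cd Yf Xf ff gf M (Int.negSucc (k+2)) :=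
        CochainComplex.of_d _ _ (Int.negSucc (k+2))
      rw [hdi] at h0
      have hkill : ∀ b, GorTest.fπ (GorTest.SZ M (k+1)) b = 0 → f b = 0 := by
        intro b hb
        obtain ⟨y, hy⟩ := GorTest.fπ_surj (GorTest.SZ M (k+2))
          (⟨b, hb⟩ : LinearMap.ker (GorTest.fπ (GorTest.SZ M (k+1))).hom)
        have h := congrArg (fun (t : GorTest.FR M (k+2) ⟶ L) => t y) h0
        simp only [ModuleCat.hom_comp, LinearMap.comp_apply] at h
        have h' : f (GorTest.szι M (k+1) (GorTest.fπ (GorTest.SZ M (k+2)) y)) = 0 := h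
        rw [hy] at h'
        exact h'
      obtain ⟨u, hu⟩ := GorTest.factor_thru_surjective
        (GorTest.fπ (GorTest.SZ M (k+1))) f (GorTest.fπ_surj _) hkill
      have huapp : ∀ a, u (GorTest.fπ (GorTest.SZ M (k+1)) a) = f a := fun a =>
        congrArg (fun (m : GorTest.FR M (k+1) ⟶ L) => m a) hu
      obtain ⟨v, hv⟩ := (GorTest.bridge M L k).mp
        (hher (k+1) (Nat.le_add_left 1 k) M L hM (hlev L hL)) u
      have hvapp : ∀ x, v (GorTest.szι M k x) = u x := fun x =>
        congrArg (fun (m : GorTest.SZ M (k+1) ⟶ L) => m x) hv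
      refine ⟨v, ?_⟩
      have hdn : (GorTest.bigComplex Yf Xf ff gf M hwapp).d (Int.negSucc (k+1)) (Int.negSucc (k+1) + 1) = GorTest.cd Yf Xf ff gf M (Int.negSucc (k+1)) :=
        CochainComplex.of_d _ _ (Int.negSucc (k+1))
      rw [hdn]
      ext x
      show f x = v (GorTest.szι M k (GorTest.fπ (GorTest.SZ M (k+1)) x))
      exact ((hvapp _).trans (huapp x)).symm
  · -- the kernel is M
    have hd01 : (GorTest.bigComplex Yf Xf ff gf M hwapp).d 0 1 = GorTest.cd Yf Xf ff gf M 0 := CochainComplex.of_d (GorTest.cX Yf Xf M) (GorTest.cd Yf Xf ff gf M) 0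
    have hrange : LinearMap.range (ff M).hom
        = LinearMap.ker ((GorTest.bigComplex Yf Xf ff gf M hwapp).d 0 1).hom := by
      ext x
      simp only [LinearMap.mem_range, LinearMap.mem_ker]
      constructor
      · rintro ⟨m, rfl⟩
        show ((GorTest.bigComplex Yf Xf ff gf M hwapp).d 0 1) (ff M m) = 0
        rw [hd01]
        show ff (GorTest.rK Xf M 1) (gf M (ff M m)) = 0
        rw [hwapp]; exact map_zero _
      · intro hx
        have hx' : GorTest.cd Yf Xf ff gf M 0 x = 0 := by rw [← hd01]; exact hx
        have h1 : ff (GorTest.rK Xf M 1) (gf (GorTest.rK Xf M 0) x) = 0 := hx'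
        have h2 : gf (GorTest.rK Xf M 0) x = 0 :=
          hfinj (GorTest.rK Xf M 1) (by rw [h1]; exact (map_zero _).symm)
        exact hexactK (GorTest.rK Xf M 0) x h2
    let e : (M : Type u) ≃ₗ[R] LinearMap.ker ((GorTest.bigComplex Yf Xf ff gf M hwapp).d 0 1).hom :=
      (LinearEquiv.ofInjective (ff M).hom (hfinj M)).trans
        (LinearEquiv.ofEq _ _ hrange)
    exact ⟨Iso.refl M ≪≫ e.toModuleIso ≪≫
      (ModuleCat.kernelIsoKer ((GorTest.bigComplex Yf Xf ff gf M hwapp).d 0 1)).symm⟩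

end
end

section
/- Let R be an AC-Gorenstein ring with trivial class W. If M is a Gorenstein AC-injective R-module, then Ext^1_R(W, M) = 0 for every W ∈ W; that is, GI ⊆ W^⊥. -/
open CategoryTheory Limits

noncomputable section
universe u
variable (R : Type u) [Ring R]

section AuxiliaryLemmas

variable {S : Type u} [Ring S]

lemma subsing_of_isZero {X : ModuleCat.{u} S} (h : IsZero X) : Subsingleton X :=
  ⟨fun a b => by
    have h0 := h.eq_of_src (𝟙 X) 0
    calc a = (𝟙 X) a := rfl
    _ = (0 : X ⟶ X) a := by rw [h0]
    _ = (𝟙 X) b := by rw [h0]; rfl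
    _ = b := rfl⟩

lemma subsing_of_isZero' {X : ModuleCat.{u} ℤ} (h : IsZero X) : Subsingleton X :=
  ⟨fun a b => by
    have h0 := h.eq_of_src (𝟙 X) 0
    calc a = (𝟙 X) a := rfl
    _ = (0 : X ⟶ X) a := by rw [h0]
    _ = (𝟙 X) b := by rw [h0]; rfl
    _ = b := rfl⟩

lemma aux_exact_nat (D : CochainComplex (ModuleCat.{u} S) ℕ) (j : ℕ) (h : D.ExactAt (j+1)) :
    ∀ x : D.X (j+1), D.d (j+1) (j+2) x = 0 → ∃ y, D.d j (j+1) y = x := by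
  rw [HomologicalComplex.exactAt_iff' D j (j+1) (j+2) (by simp)
    (by simp only [CochainComplex.next]; rfl)] at h
  exact fun x hx => (ShortComplex.moduleCat_exact_iff _).1 h x hx

lemma liftingOfFinAC (P : ModuleCat.{u} S → Prop) (C : CochainComplex (ModuleCat.{u} S) ℤ)
    (hinj : ∀ n, CategoryTheory.Injective (C.X n))
    (hlift : ∀ A, P A → ∀ (n : ℤ) (f : A ⟶ C.X n), f ≫ C.d n (n+1) = 0 →
      ∃ g : A ⟶ C.X (n-1), f = g ≫ C.d (n-1) n)
    (m : ℕ) (W : ModuleCat.{u} S) (hW : HasCoresLen S P m W) :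
    ∀ (a b : ℤ), b + 1 = a → ∀ f : W ⟶ C.X a, f ≫ C.d a (a+1) = 0 →
      ∃ g : W ⟶ C.X b, f = g ≫ C.d b a := by
  obtain ⟨D, ι, hqi, habs, hzero⟩ := hW
  haveI := hqi
  let Z : ℕ → ModuleCat.{u} S := fun j => ModuleCat.of S (LinearMap.ker (D.d j (j+1)).hom)
  let Q : ModuleCat.{u} S → Prop := fun V =>
    ∀ (a b : ℤ), b + 1 = a → ∀ f : V ⟶ C.X a, f ≫ C.d a (a+1) = 0 →
      ∃ g : V ⟶ C.X b, f = g ≫ C.d b a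
  have hDexact : ∀ j : ℕ, D.ExactAt (j+1) := fun j =>
    (quasiIsoAt_iff_exactAt ι (j+1) (CochainComplex.exactAt_succ_single_obj _ _)).1 inferInstance
  have key : ∀ (t j : ℕ), m + 1 ≤ j + t → Q (Z j) := by
    intro t
    induction t with
    | zero =>
      intro j hj a b hab f hf
      have hzj : IsZero (D.X j) := hzero j (by omega)
      haveI : Subsingleton (D.X j) := subsing_of_isZero hzj
      haveI : Subsingleton (Z j) := ⟨fun a b => Subtype.ext (Subsingleton.elim _ _)⟩
      refine ⟨0, ?_⟩
      ext x
      have hx0 : x = 0 := Subsingleton.elim _ _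
      rw [hx0]
      simp
    | succ t ih =>
      intro j hj
      by_cases hc : m + 1 ≤ j + t
      · exact ih j hc
      · have hjm : j ≤ m := by omega
        intro a b hab f hf
        have hA : P (D.X j) := habs j hjm
        haveI : CategoryTheory.Injective (C.X a) := hinj a
        let incl : Z j ⟶ D.X j := ModuleCat.ofHom (LinearMap.ker (D.d j (j+1)).hom).subtype
        haveI : Mono incl := (ModuleCat.mono_iff_injective _).2 Subtype.val_injective
        let h : D.X j ⟶ C.X a := Injective.factorThru f incl
        have hh : incl ≫ h = f := Injective.comp_factorThru f incl
        let p : D.X j ⟶ Z (j+1) :=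
          ModuleCat.ofHom (LinearMap.codRestrict (LinearMap.ker (D.d (j+1) (j+2)).hom) (D.d j (j+1)).hom (fun x =>
            LinearMap.mem_ker.mpr
              (ConcreteCategory.congr_hom (D.d_comp_d j (j+1) (j+2)) x)))
        haveI : Epi p := by
          refine (ModuleCat.epi_iff_surjective _).2 (fun z => ?_)
          obtain ⟨y, hy⟩ := aux_exact_nat D j (hDexact j) z.1 z.2
          exact ⟨y, Subtype.ext hy⟩
        have hinclp : incl ≫ p = 0 := by
          ext x
          exact x.2
        have hS2 : (ShortComplex.mk incl p hinclp).Exact := by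
          refine (ShortComplex.moduleCat_exact_iff _).2 (fun x hx => ?_)
          have : D.d j (j+1) x = 0 := congrArg Subtype.val hx
          exact ⟨⟨x, this⟩, rfl⟩
        let f' : Z (j+1) ⟶ C.X (a+1) := hS2.desc (h ≫ C.d a (a+1)) (by
          rw [← Category.assoc, hh, hf])
        have hpf' : p ≫ f' = h ≫ C.d a (a+1) := hS2.g_desc _ _
        have hf'd : f' ≫ C.d (a+1) (a+1+1) = 0 := by
          rw [← cancel_epi p, ← Category.assoc, hpf', Category.assoc,
            HomologicalComplex.d_comp_d, Limits.comp_zero, Limits.comp_zero]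
        obtain ⟨g', hg'⟩ := ih (j+1) (by omega) (a+1) a rfl f' hf'd
        let h₂ : D.X j ⟶ C.X a := h - p ≫ g'
        have hh₂ : h₂ ≫ C.d a (a+1) = 0 := by
          simp only [h₂, Preadditive.sub_comp, Category.assoc, ← hg', hpf', sub_self]
        obtain ⟨g0, hg0⟩ := hlift (D.X j) hA a h₂ hh₂
        refine ⟨incl ≫ g0 ≫ (C.XIsoOfEq (show a - 1 = b by omega)).hom, ?_⟩
        have hfh : f = incl ≫ h₂ := by
          simp only [h₂, Preadditive.comp_sub, ← Category.assoc, hinclp, hh,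
            Limits.zero_comp, sub_zero]
        rw [hfh, hg0]
        simp only [Category.assoc, HomologicalComplex.XIsoOfEq_hom_comp_d]
  have hkf : IsLimit (KernelFork.ofι (ι.f 0) (show ι.f 0 ≫ D.d 0 1 = 0 by rw [ι.comm 0 1, HomologicalComplex.single_obj_d, Limits.zero_comp])) := by
    refine IsLimit.ofIsoLimit (D.cyclesIsKernel 0 1 (by simp)) (Iso.symm ?_)
    refine Fork.ext ((HomologicalComplex.singleObjHomologySelfIso
        (ComplexShape.up ℕ) 0 W).symm ≪≫
      isoOfQuasiIsoAt ι 0 ≪≫ D.isoHomologyπ₀.symm) ?_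
    erw [← cancel_epi (HomologicalComplex.singleObjHomologySelfIso
        (ComplexShape.up ℕ) 0 W).hom,
      ← cancel_epi (CochainComplex.isoHomologyπ₀ _).hom,
      ← cancel_epi (HomologicalComplex.singleObjCyclesSelfIso (ComplexShape.up ℕ) 0 W).inv]
    simp
    erw [HomologicalComplex.singleObjCyclesSelfIso_inv_iCycles_assoc]; rfl
  have hS0 : (ShortComplex.mk (ι.f 0) (D.d 0 1) (by rw [ι.comm 0 1, HomologicalComplex.single_obj_d, Limits.zero_comp])).Exact :=
    ShortComplex.exact_of_f_is_kernel _ hkf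
  haveI : Mono (ι.f 0) := mono_of_isLimit_fork hkf
  let si := HomologicalComplex.singleObjXSelf (ComplexShape.up ℕ) 0 W
  let u : W ⟶ D.X 0 := si.inv ≫ ι.f 0
  haveI : Mono u := mono_comp _ _
  have hu0 : u ≫ D.d 0 1 = 0 := by
    simp only [u, Category.assoc]; rw [show ι.f 0 ≫ D.d 0 1 = 0 by rw [ι.comm 0 1, HomologicalComplex.single_obj_d, Limits.zero_comp], Limits.comp_zero]
  have huinj : Function.Injective u := (ModuleCat.mono_iff_injective u).1 inferInstance
  have husurj : ∀ x : D.X 0, D.d 0 1 x = 0 → ∃ w, u w = x := by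
    intro x hx
    obtain ⟨x₁, hx₁⟩ := (ShortComplex.moduleCat_exact_iff _).1 hS0 x hx
    refine ⟨si.hom x₁, ?_⟩
    have : si.inv (si.hom x₁) = x₁ := ConcreteCategory.congr_hom si.hom_inv_id x₁
    show ι.f 0 (si.inv (si.hom x₁)) = x
    rw [this, hx₁]
  let u' : W →ₗ[S] LinearMap.ker (D.d 0 1).hom :=
    LinearMap.codRestrict _ u.hom (fun w => ConcreteCategory.congr_hom hu0 w)
  have hbij : Function.Bijective u' := by
    constructor
    · intro x y hxy
      exact huinj (congrArg Subtype.val hxy)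
    · intro z
      obtain ⟨w, hw⟩ := husurj z.1 z.2
      exact ⟨w, Subtype.ext hw⟩
  let eqv := LinearEquiv.ofBijective u' hbij
  let eIso : W ≅ Z 0 :=
    { hom := ModuleCat.ofHom (eqv : W →ₗ[S] LinearMap.ker (D.d 0 1).hom)
      inv := ModuleCat.ofHom (eqv.symm : LinearMap.ker (D.d 0 1).hom →ₗ[S] W)
      hom_inv_id := by ext x; exact eqv.symm_apply_apply x
      inv_hom_id := by ext x; exact congrArg Subtype.val (eqv.apply_symm_apply x) }
  intro a b hab f hf
  obtain ⟨g, hg⟩ := key (m+1) 0 (by omega) a b hab (eIso.inv ≫ f) (by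
    rw [Category.assoc, hf, Limits.comp_zero])
  refine ⟨eIso.hom ≫ g, ?_⟩
  rw [Category.assoc, ← hg, ← Category.assoc, eIso.hom_inv_id, Category.id_comp]

lemma exactAt_of_lift' (P : ChainComplex (ModuleCat.{u} S) ℕ) (M : ModuleCat.{u} S)
    (h : ∀ f : P.X 1 ⟶ M, P.d 2 1 ≫ f = 0 → ∃ g : P.X 0 ⟶ M, P.d 1 0 ≫ g = f) :
    (P.linearYonedaObj ℤ M).ExactAt 1 := by
  rw [HomologicalComplex.exactAt_iff' _ 0 1 2 (by simp) (by simp only [CochainComplex.next]; rfl)]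
  refine (ShortComplex.moduleCat_exact_iff _).2 (fun f hf => ?_)
  obtain ⟨g, hg⟩ := h f hf
  exact ⟨g, hg⟩

lemma main_lift (C : CochainComplex (ModuleCat.{u} S) ℤ) (M W : ModuleCat.{u} S)
    (e : M ≅ kernel (C.d 0 1)) (hinj : ∀ n, CategoryTheory.Injective (C.X n))
    (lifting : ∀ (a b : ℤ), b + 1 = a → ∀ f : W ⟶ C.X a, f ≫ C.d a (a+1) = 0 →
      ∃ g : W ⟶ C.X b, f = g ≫ C.d b a)
    (P : CategoryTheory.ProjectiveResolution W)
    (f : P.complex.X 1 ⟶ M) (hf' : P.complex.d 2 1 ≫ f = 0) :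
    ∃ g : P.complex.X 0 ⟶ M, P.complex.d 1 0 ≫ g = f := by
  let i : M ⟶ C.X 0 := e.hom ≫ kernel.ι (C.d 0 1)
  haveI : Mono i := mono_comp _ _
  have hi0 : i ≫ C.d 0 1 = 0 := by
    simp only [i, Category.assoc, kernel.condition, Limits.comp_zero]
  have hfK : ∀ x : P.complex.X 1, P.complex.d 1 0 x = 0 → f x = 0 := by
    intro x hx
    obtain ⟨y, hy⟩ := (ShortComplex.moduleCat_exact_iff _).1 (P.exact_succ 0) x hx
    rw [← hy]
    exact ConcreteCategory.congr_hom hf' y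
  let K := LinearMap.range (P.complex.d 1 0).hom
  have hker : LinearMap.ker (P.complex.d 1 0).hom ≤ LinearMap.ker ((f ≫ i :
      P.complex.X 1 ⟶ C.X 0)).hom := by
    intro x hx
    have h1 : f x = 0 := hfK x hx
    show i (f x) = 0
    rw [h1, map_zero]
  let φbar := (LinearMap.ker (P.complex.d 1 0).hom).liftQ
    (f ≫ i : P.complex.X 1 ⟶ C.X 0).hom hker
  let eqv := LinearMap.quotKerEquivRange (P.complex.d 1 0).hom
  let φ' : ModuleCat.of S K ⟶ C.X 0 := ModuleCat.ofHom (φbar ∘ₗ (eqv.symm : K →ₗ[S] _))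
  have hφ' : ∀ x : P.complex.X 1, ∀ h, φ' ⟨P.complex.d 1 0 x, h⟩ = i (f x) := by
    intro x h
    have h1 : eqv (Submodule.Quotient.mk x) = ⟨P.complex.d 1 0 x, h⟩ := by
      apply Subtype.ext
      rfl
    have h2 : eqv.symm ⟨P.complex.d 1 0 x, h⟩ = Submodule.Quotient.mk x := by
      rw [← h1, LinearEquiv.symm_apply_apply]
    show φbar (eqv.symm ⟨P.complex.d 1 0 x, h⟩) = i (f x)
    rw [h2]
    rfl
  let inclK : ModuleCat.of S K ⟶ P.complex.X 0 := ModuleCat.ofHom K.subtype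
  haveI : Mono inclK := (ModuleCat.mono_iff_injective _).2 Subtype.val_injective
  haveI : CategoryTheory.Injective (C.X 0) := hinj 0
  let ψ : P.complex.X 0 ⟶ C.X 0 := Injective.factorThru φ' inclK
  have hψ : ∀ x : P.complex.X 1, ψ (P.complex.d 1 0 x) = i (f x) := by
    intro x
    have hmem : P.complex.d 1 0 x ∈ K := ⟨x, rfl⟩
    have h1 : ψ (P.complex.d 1 0 x) = φ' ⟨P.complex.d 1 0 x, hmem⟩ :=
      ConcreteCategory.congr_hom (Injective.comp_factorThru φ' inclK)
        (⟨P.complex.d 1 0 x, hmem⟩ : K)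
    rw [h1, hφ' x hmem]
  let θ : P.complex.X 0 ⟶ C.X 1 := ψ ≫ C.d 0 1
  have hθ : P.complex.d 1 0 ≫ θ = 0 := by
    ext x
    show C.d 0 1 (ψ (P.complex.d 1 0 x)) = 0
    rw [hψ x]
    exact ConcreteCategory.congr_hom hi0 (f x)
  let θbar := P.exact₀.desc θ hθ
  have hθbar : P.π.f 0 ≫ θbar = θ := P.exact₀.g_desc θ hθ
  let si := HomologicalComplex.singleObjXSelf (ComplexShape.down ℕ) 0 W
  let θW : W ⟶ C.X 1 := si.inv ≫ θbar
  have hθW : θW ≫ C.d 1 (1+1) = 0 := by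
    have h1 : θbar ≫ C.d 1 (1+1) = 0 := by
      rw [← cancel_epi (P.π.f 0), ← Category.assoc, hθbar, comp_zero]
      simp only [θ, Category.assoc, HomologicalComplex.d_comp_d, Limits.comp_zero]
    simp only [θW, Category.assoc, h1, Limits.comp_zero]
  obtain ⟨g1, hg1⟩ := lifting 1 0 rfl θW hθW
  let ψ' : P.complex.X 0 ⟶ C.X 0 := ψ - P.π.f 0 ≫ si.hom ≫ g1
  have hψ'0 : ψ' ≫ C.d 0 1 = 0 := by
    have h2 : si.hom ≫ θW = θbar := by
      simp only [θW, ← Category.assoc, si.hom_inv_id, Category.id_comp]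
    simp only [ψ', Preadditive.sub_comp, Category.assoc, ← hg1, h2, hθbar, θ, sub_self]
  let g0 : P.complex.X 0 ⟶ M := kernel.lift (C.d 0 1) ψ' hψ'0 ≫ e.inv
  refine ⟨g0, ?_⟩
  rw [← cancel_mono i]
  have hl : g0 ≫ i = ψ' := by
    simp only [g0, i, Category.assoc, Iso.inv_hom_id_assoc, kernel.lift_ι]
  rw [Category.assoc, hl]
  ext x
  show ψ' (P.complex.d 1 0 x) = i (f x)
  have hz : (P.π.f 0) (P.complex.d 1 0 x) = 0 :=
    ConcreteCategory.congr_hom P.complex_d_comp_π_f_zero x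
  show ψ (P.complex.d 1 0 x) - (si.hom ≫ g1) ((P.π.f 0) (P.complex.d 1 0 x)) = i (f x)
  rw [hz, map_zero, sub_zero, hψ x]

end AuxiliaryLemmas

/-- over an AC-Gorenstein ring of dimension `d`, every Gorenstein
AC-injective module `M` satisfies `Ext^1(W, M) = 0` for every trivial module `W`. -/
theorem stmt_16 (R : Type u) [Ring R] (d : ℕ) (h : IsACGor R d)
    (M : ModuleCat.{u} R) (hM : IsGorACInj R M) :
    ∀ W : ModuleCat.{u} R, ad R W ≤ (d : ℕ∞) → extVanish R 1 W M := by
  intro W hW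
  obtain ⟨C, hinj, hexact, hlift, ⟨e⟩⟩ := hM
  have hne : {n : ℕ∞ | ∃ m : ℕ, n = m ∧ HasCoresLen R (IsAbsClean R) m W}.Nonempty := by
    by_contra hc
    rw [Set.not_nonempty_iff_eq_empty] at hc
    have had : ad R W = ⊤ := by rw [ad, hc, sInf_empty]
    rw [had, top_le_iff] at hW
    exact (ENat.coe_ne_top d) hW
  obtain ⟨n, m, hn, hcor⟩ := hne
  have lifting := liftingOfFinAC (IsAbsClean R) C hinj hlift m W hcor
  let P : CategoryTheory.ProjectiveResolution W := (HasProjectiveResolution.out (Z := W)).some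
  have hex : (P.complex.linearYonedaObj ℤ M).ExactAt 1 :=
    exactAt_of_lift' P.complex M (fun f hf => main_lift C M W e hinj lifting P f hf)
  have hzero : IsZero ((P.complex.linearYonedaObj ℤ M).homology 1) :=
    (HomologicalComplex.exactAt_iff_isZero_homology _ _).1 hex
  haveI hs : Subsingleton ((P.complex.linearYonedaObj ℤ M).homology 1) :=
    subsing_of_isZero' hzero
  let E := P.isoExt (R := ℤ) 1 M
  refine ⟨fun a b => ?_⟩
  have hE : E.hom a = E.hom b := Subsingleton.elim _ _
  calc a = E.inv (E.hom a) := (ConcreteCategory.congr_hom E.hom_inv_id a).symm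
  _ = E.inv (E.hom b) := by rw [hE]
  _ = b := ConcreteCategory.congr_hom E.hom_inv_id b


end
end
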